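/- Let X be a T1 regular topological space and let f : 𝕊 → X be a continuous open surjection from the Sorgenfrey line onto X. For rationals a < b, let P_{a,b} := { x ∈ [a, b) : for all y ∈ [a, b), f(y) = f(x) implies y = x }. Then for all rationals a < b, the restriction of f to P_{a,b} (with the subspace topology from the Sorgenfrey line) is a homeomorphism onto its image f[P_{a,b}] (with the subspace topology from X); equivalently, f restricted to P_{a,b} is an injective open embedding onto f[P_{a,b}]. -/

import Mathlib

open Set Filter Topology Function

/-- The Sorgenfrey line: the real line as a type synonym. -/
def SorgenfreyLine : Type := ℝ

notation "𝕊" => SorgenfreyLine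

noncomputable instance : LinearOrder 𝕊 := inferInstanceAs (LinearOrder ℝ)
instance : RatCast 𝕊 := inferInstanceAs (RatCast ℝ)

/-- The topology on the Sorgenfrey line, generated by half-open intervals `[a, b)`, `a < b`. -/
instance : TopologicalSpace 𝕊 :=
  TopologicalSpace.generateFrom {s : Set 𝕊 | ∃ a b : 𝕊, a < b ∧ s = Set.Ico a b}

/-- `Pab f a b` is the set of points `x ∈ [a, b)` that are the unique point of `[a, b)`
mapped by `f` to `f x`. -/
def Pab {X : Type*} (f : 𝕊 → X) (a b : 𝕊) : Set 𝕊 :=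
  {x | x ∈ Set.Ico a b ∧ ∀ y ∈ Set.Ico a b, f y = f x → y = x}

lemma sorgenfrey_isOpen_Ico {p q : 𝕊} (h : p < q) : IsOpen (Set.Ico p q) :=
  TopologicalSpace.isOpen_generateFrom_of_mem ⟨p, q, h, rfl⟩

lemma sorgenfrey_exists_Ico {V : Set 𝕊} (hV : IsOpen V) :
    ∀ x ∈ V, ∃ c, x < c ∧ Set.Ico x c ⊆ V := by
  have h : TopologicalSpace.GenerateOpen
      {s : Set 𝕊 | ∃ a b : 𝕊, a < b ∧ s = Set.Ico a b} V := hV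
  clear hV
  induction h with
  | basic s hs =>
      rcases hs with ⟨p, q, hpq, rfl⟩
      intro x hx
      exact ⟨q, hx.2, fun y hy => ⟨le_trans hx.1 hy.1, hy.2⟩⟩
  | univ =>
      intro x _
      refine ⟨(show ℝ from x) + 1, ?_, fun _ _ => trivial⟩
      exact lt_add_one (show ℝ from x)
  | inter s t _ _ ihs iht =>
      intro x hx
      obtain ⟨c1, h1, hs1⟩ := ihs x hx.1
      obtain ⟨c2, h2, ht2⟩ := iht x hx.2
      exact ⟨min c1 c2, lt_min h1 h2, fun y hy =>
        ⟨hs1 ⟨hy.1, lt_of_lt_of_le hy.2 (min_le_left _ _)⟩,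
         ht2 ⟨hy.1, lt_of_lt_of_le hy.2 (min_le_right _ _)⟩⟩⟩
  | sUnion S hS ih =>
      intro x hx
      rcases hx with ⟨s, hsS, hxs⟩
      obtain ⟨c, hc, hsub⟩ := ih s hsS x hxs
      exact ⟨c, hc, fun y hy => ⟨s, hsS, hsub hy⟩⟩

/-- For a continuous open surjection `f` from the Sorgenfrey line onto a T1 regular space and
rationals `a < b`, the restriction of `f` to `P_{a,b}` is a homeomorphism onto its image. -/
theorem stmt8 {X : Type} [TopologicalSpace X] [T1Space X] [RegularSpace X] (f : 𝕊 → X)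
    (hf : Continuous f) (hopen : IsOpenMap f) (hsurj : Surjective f)
    (a b : ℚ) (hab : a < b) :
    ∃ e : (Pab f (a : 𝕊) (b : 𝕊)) ≃ₜ (f '' Pab f (a : 𝕊) (b : 𝕊) : Set X),
      ∀ x : Pab f (a : 𝕊) (b : 𝕊), (e x : X) = f x := by
  have hab' : (a : 𝕊) < (b : 𝕊) := by
    show (a : ℝ) < (b : ℝ); exact_mod_cast hab
  set s : Set 𝕊 := Pab f (a : 𝕊) (b : 𝕊) with hs
  have hinj : Set.InjOn f s := by
    intro x hx y hy hxy
    exact hy.2 x hx.1 hxy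
  -- the forward map
  let F : s → (f '' s : Set X) := fun x => ⟨f x, Set.mem_image_of_mem f x.2⟩
  have hFcont : Continuous F :=
    Continuous.subtype_mk (hf.comp continuous_subtype_val) _
  have hFopen : IsOpenMap F := by
    intro U hU
    rcases isOpen_induced_iff.mp hU with ⟨V, hV, rfl⟩
    -- for each point, find a basic open witness
    have key : ∀ x : s, (x : 𝕊) ∈ V → ∃ W : Set X, IsOpen W ∧ f x ∈ W ∧
        ∀ y : s, f y ∈ W → y ∈ (Subtype.val ⁻¹' V : Set s) := by
      intro x hxV
      have hVio : IsOpen (V ∩ Set.Ico (a : 𝕊) (b : 𝕊)) :=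
        hV.inter (sorgenfrey_isOpen_Ico hab')
      obtain ⟨c, hc, hsub⟩ := sorgenfrey_exists_Ico hVio (x : 𝕊) ⟨hxV, x.2.1⟩
      refine ⟨f '' Set.Ico (x : 𝕊) c, hopen _ (sorgenfrey_isOpen_Ico hc), ⟨x, ⟨le_refl _, hc⟩, rfl⟩, ?_⟩
      rintro y ⟨z, hz, hfz⟩
      have hzIco : z ∈ Set.Ico (a : 𝕊) (b : 𝕊) := (hsub hz).2
      have : z = (y : 𝕊) := y.2.2 z hzIco hfz
      subst this
      exact (hsub hz).1
    choose W hWopen hWmem hWsub using key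
    have : F '' (Subtype.val ⁻¹' V) =
        Subtype.val ⁻¹' (⋃ (x : s) (hx : (x : 𝕊) ∈ V), W x hx) := by
      ext ⟨p, hp⟩
      simp only [Set.mem_image, Set.mem_preimage, Set.mem_iUnion]
      constructor
      · rintro ⟨x, hxV, hFx⟩
        have hfx : f (x : 𝕊) = p := congrArg Subtype.val hFx
        exact ⟨x, hxV, hfx ▸ hWmem x hxV⟩
      · rintro ⟨x, hxV, hpW⟩
        rcases hp with ⟨q, hq, rfl⟩
        have : (⟨q, hq⟩ : s) ∈ (Subtype.val ⁻¹' V : Set s) :=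
          hWsub x hxV ⟨q, hq⟩ hpW
        exact ⟨⟨q, hq⟩, this, rfl⟩
    rw [this]
    exact (isOpen_iUnion fun x => isOpen_iUnion fun hx => hWopen x hx).preimage continuous_subtype_val
  have hFsurj : Function.Surjective F := by
    rintro ⟨p, q, hq, rfl⟩
    exact ⟨⟨q, hq⟩, rfl⟩
  have hFinj : Function.Injective F := by
    intro x y hxy
    have : f x = f y := congrArg Subtype.val hxy
    exact Subtype.ext (hinj x.2 y.2 this)
  let E : s ≃ (f '' s : Set X) := Equiv.ofBijective F ⟨hFinj, hFsurj⟩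
  refine ⟨Equiv.toHomeomorphOfContinuousOpen E hFcont hFopen, fun x => rfl⟩
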